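/- Let (F_t)_{t >= 0} be a filtration on a probability space and (A_t)_{t >= 1} events with A_t in F_t for each t. Let m and T be integers with 2 <= m <= T and let delta in (0,1). Then with probability at least 1 - delta: sum_{t=m}^{T} t^{-1/2} * 1_{A_t} <= sqrt(4 * log(T) * log(1/delta)) + sum_{t=m}^{T} t^{-1/2} * P(A_t | F_{t-1}), where P(A_t | F_{t-1}) = E[1_{A_t} | F_{t-1}]. -/

import Mathlib

open MeasureTheory ProbabilityTheory Real

lemma exp_mul_le_cosh_add (r x : ℝ) (hx : |x| ≤ 1) :
    Real.exp (r * x) ≤ Real.cosh r + Real.sinh r * x := by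
  rw [abs_le] at hx
  have ha : (0:ℝ) ≤ (1 - x) / 2 := by linarith
  have hb : (0:ℝ) ≤ (1 + x) / 2 := by linarith
  have hab : (1 - x) / 2 + (1 + x) / 2 = 1 := by ring
  have h := convexOn_exp.2 (Set.mem_univ (-r)) (Set.mem_univ r) ha hb hab
  simp only [smul_eq_mul] at h
  have h1 : (1 - x) / 2 * (-r) + (1 + x) / 2 * r = r * x := by ring
  rw [h1] at h
  calc Real.exp (r * x) ≤ (1 - x) / 2 * Real.exp (-r) + (1 + x) / 2 * Real.exp r := h
    _ = Real.cosh r + Real.sinh r * x := by rw [Real.cosh_eq, Real.sinh_eq]; ring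

lemma inv_le_log_sub (n : ℕ) (hn : 2 ≤ n) :
    ((n:ℝ))⁻¹ ≤ Real.log n - Real.log ((n:ℝ) - 1) := by
  have hn1 : (2:ℝ) ≤ (n:ℝ) := by exact_mod_cast hn
  have h0 : (0:ℝ) < (n:ℝ) - 1 := by linarith
  have hnpos : (0:ℝ) < (n:ℝ) := by linarith
  have hx : (0:ℝ) < ((n:ℝ) - 1) / n := by positivity
  have := Real.log_le_sub_one_of_pos hx
  rw [Real.log_div (by linarith) (by linarith)] at this
  have : Real.log ((n:ℝ) - 1) - Real.log n ≤ ((n:ℝ) - 1) / n - 1 := this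
  have heq : ((n:ℝ) - 1) / n - 1 = -(n:ℝ)⁻¹ := by field_simp; ring
  linarith [heq ▸ this]

lemma harmonic_Icc_le (m T : ℕ) (hm : 2 ≤ m) (hmT : m ≤ T) :
    ∑ t ∈ Finset.Icc m T, ((t:ℝ))⁻¹ ≤ Real.log T := by
  have key : ∀ k, m ≤ k → ∑ t ∈ Finset.Icc m k, ((t:ℝ))⁻¹ ≤ Real.log k - Real.log ((m:ℝ) - 1) := by
    intro k hk
    induction k, hk using Nat.le_induction with
    | base =>
        rw [Finset.Icc_self, Finset.sum_singleton]
        linarith [inv_le_log_sub m hm]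
    | succ n hn ih =>
        rw [Finset.sum_Icc_succ_top (by omega)]
        have h2 : 2 ≤ n + 1 := by omega
        have := inv_le_log_sub (n+1) h2
        push_cast at this ⊢
        have h3 : ((n:ℝ) + 1 - 1) = (n:ℝ) := by ring
        rw [h3] at this
        linarith
  have hlog : 0 ≤ Real.log ((m:ℝ) - 1) := by
    apply Real.log_nonneg
    have : (2:ℝ) ≤ (m:ℝ) := by exact_mod_cast hm
    linarith
  linarith [key T hmT]

lemma condexp_exp_mul_le {Ω : Type*} {m0 : MeasurableSpace Ω} {P : Measure Ω}
    [IsProbabilityMeasure P] {m : MeasurableSpace Ω} (hm : m ≤ m0)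
    (D : Ω → ℝ) (hDi : Integrable D P) (hbdd : ∀ᵐ ω ∂P, |D ω| ≤ 1)
    (hcond : P[D | m] =ᵐ[P] 0) (r : ℝ) :
    P[fun ω => Real.exp (r * D ω) | m] ≤ᵐ[P] fun _ => Real.exp (r^2/2) := by
  have hint1 : Integrable (fun ω => Real.exp (r * D ω)) P := by
    refine (integrable_const (Real.exp |r|)).mono'
      (Real.continuous_exp.comp_aestronglyMeasurable (hDi.1.const_mul r)) ?_
    filter_upwards [hbdd] with ω h
    rw [Real.norm_eq_abs, Real.abs_exp]
    apply Real.exp_le_exp.2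
    calc r * D ω ≤ |r * D ω| := le_abs_self _
      _ = |r| * |D ω| := abs_mul r (D ω)
      _ ≤ |r| * 1 := by gcongr
      _ = |r| := mul_one _
  have hint2 : Integrable (fun ω => Real.cosh r + Real.sinh r * D ω) P :=
    (integrable_const _).add (hDi.const_mul _)
  have hle : (fun ω => Real.exp (r * D ω)) ≤ᵐ[P] fun ω => Real.cosh r + Real.sinh r * D ω := by
    filter_upwards [hbdd] with ω h
    exact exp_mul_le_cosh_add r (D ω) h
  have hmono := condExp_mono (m := m) hint1 hint2 hle
  have hc : P[fun ω => Real.cosh r + Real.sinh r * D ω | m] =ᵐ[P] fun _ => Real.cosh r := by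
    have h1 : P[fun ω => Real.cosh r + Real.sinh r * D ω | m] =ᵐ[P]
        P[fun _ => Real.cosh r | m] + P[fun ω => Real.sinh r * D ω | m] :=
      condExp_add (f := fun _ => Real.cosh r) (g := fun ω => Real.sinh r * D ω)
        (integrable_const _) (hDi.const_mul _) m
    have h2 : P[fun _ : Ω => Real.cosh r | m] = fun _ => Real.cosh r := condExp_const hm _
    have h3 : P[fun ω => Real.sinh r * D ω | m] =ᵐ[P] fun ω => Real.sinh r * (P[D|m]) ω := by
      simpa [Pi.smul_def, smul_eq_mul] using condExp_smul (μ := P) (Real.sinh r) D m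
    filter_upwards [h1, h3, hcond] with ω e1 e3 ec
    simp only [Pi.add_apply, h2] at e1
    rw [e1, e3, ec]
    simp
  have hfin : (fun _ : Ω => Real.cosh r) ≤ᵐ[P] fun _ => Real.exp (r^2/2) :=
    Filter.Eventually.of_forall fun ω => Real.cosh_le_exp_half_sq r
  exact hmono.trans (hc.le.trans hfin)

lemma integrable_of_bdd {Ω : Type*} {m0 : MeasurableSpace Ω} {P : Measure Ω}
    [IsProbabilityMeasure P] {f : Ω → ℝ} (hf : AEStronglyMeasurable f P) {C : ℝ}
    (h : ∀ᵐ ω ∂P, ‖f ω‖ ≤ C) : Integrable f P :=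
  (integrable_const C).mono' hf h

lemma azuma_mgf {Ω : Type*} {m0 : MeasurableSpace Ω} {P : Measure Ω} [IsProbabilityMeasure P]
    (F : Filtration ℕ m0) (D : ℕ → Ω → ℝ)
    (hmeas : ∀ t, StronglyMeasurable[F t] (D t))
    (hDi : ∀ t, Integrable (D t) P)
    (hbdd : ∀ t, ∀ᵐ ω ∂P, |D t ω| ≤ 1)
    (hcond : ∀ t, P[D t | F (t-1)] =ᵐ[P] 0)
    (c : ℕ → ℝ) (l : ℝ) (m : ℕ) (hm : 1 ≤ m) :
    ∀ k, ∫ ω, Real.exp (l * ∑ t ∈ Finset.Icc m k, c t * D t ω) ∂P ≤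
      Real.exp (l^2/2 * ∑ t ∈ Finset.Icc m k, (c t)^2) := by
  have hball : ∀ᵐ ω ∂P, ∀ t, |D t ω| ≤ 1 := ae_all_iff.2 hbdd
  -- generic boundedness of the partial exponential
  have hfb : ∀ k, ∀ᵐ ω ∂P, ‖Real.exp (l * ∑ t ∈ Finset.Icc m k, c t * D t ω)‖ ≤
      Real.exp (|l| * ∑ t ∈ Finset.Icc m k, |c t|) := by
    intro k
    filter_upwards [hball] with ω h
    rw [Real.norm_eq_abs, Real.abs_exp]
    apply Real.exp_le_exp.2
    calc l * ∑ t ∈ Finset.Icc m k, c t * D t ω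
        ≤ |l * ∑ t ∈ Finset.Icc m k, c t * D t ω| := le_abs_self _
      _ = |l| * |∑ t ∈ Finset.Icc m k, c t * D t ω| := abs_mul _ _
      _ ≤ |l| * ∑ t ∈ Finset.Icc m k, |c t| := by
          refine mul_le_mul_of_nonneg_left ?_ (abs_nonneg l)
          refine (Finset.abs_sum_le_sum_abs _ _).trans (Finset.sum_le_sum fun t _ => ?_)
          rw [abs_mul]
          exact mul_le_of_le_one_right (abs_nonneg _) (h t)
  have hfm : ∀ k, StronglyMeasurable[F k] fun ω =>
      Real.exp (l * ∑ t ∈ Finset.Icc m k, c t * D t ω) := by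
    intro k
    refine Real.continuous_exp.comp_stronglyMeasurable ?_
    refine StronglyMeasurable.const_mul ?_ l
    exact Finset.stronglyMeasurable_fun_sum _ fun t ht =>
      ((hmeas t).mono (F.mono (Finset.mem_Icc.1 ht).2)).const_mul (c t)
  have hfi : ∀ k, Integrable (fun ω =>
      Real.exp (l * ∑ t ∈ Finset.Icc m k, c t * D t ω)) P := fun k =>
    integrable_of_bdd ((hfm k).mono (F.le k)).aestronglyMeasurable (hfb k)
  intro k
  induction k with
  | zero =>
      rw [Finset.Icc_eq_empty (by omega)]
      simp
  | succ k ih =>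
      by_cases hk : m ≤ k + 1
      · -- split the sum
        set f : Ω → ℝ := fun ω => Real.exp (l * ∑ t ∈ Finset.Icc m k, c t * D t ω) with hf_def
        set g : Ω → ℝ := fun ω => Real.exp ((l * c (k+1)) * D (k+1) ω) with hg_def
        have hsplit : ∀ ω, Real.exp (l * ∑ t ∈ Finset.Icc m (k+1), c t * D t ω) = f ω * g ω := by
          intro ω
          rw [Finset.sum_Icc_succ_top hk, mul_add, Real.exp_add, hf_def, hg_def]
          ring_nf
        have hgi : Integrable g P := by
          refine integrable_of_bdd
            (Real.continuous_exp.comp_aestronglyMeasurable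
              (((hDi (k+1)).1.const_mul _))) (C := Real.exp |l * c (k+1)|) ?_
          filter_upwards [hbdd (k+1)] with ω h
          rw [Real.norm_eq_abs, Real.abs_exp]
          apply Real.exp_le_exp.2
          calc (l * c (k+1)) * D (k+1) ω ≤ |(l * c (k+1)) * D (k+1) ω| := le_abs_self _
            _ = |l * c (k+1)| * |D (k+1) ω| := abs_mul _ _
            _ ≤ |l * c (k+1)| := mul_le_of_le_one_right (abs_nonneg _) h
        have hfgi : Integrable (fun ω => f ω * g ω) P := by
          refine integrable_of_bdd (((hfm k).mono (F.le k)).aestronglyMeasurable.mul hgi.1)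
            (C := Real.exp (|l| * ∑ t ∈ Finset.Icc m k, |c t|) * Real.exp |l * c (k+1)|) ?_
          filter_upwards [hfb k, hbdd (k+1)] with ω h1 h2
          rw [norm_mul]
          refine mul_le_mul h1 ?_ (norm_nonneg _) (Real.exp_nonneg _)
          rw [Real.norm_eq_abs, Real.abs_exp]
          apply Real.exp_le_exp.2
          calc (l * c (k+1)) * D (k+1) ω ≤ |(l * c (k+1)) * D (k+1) ω| := le_abs_self _
            _ = |l * c (k+1)| * |D (k+1) ω| := abs_mul _ _
            _ ≤ |l * c (k+1)| := mul_le_of_le_one_right (abs_nonneg _) h2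
        have hpull : P[fun ω => f ω * g ω | F k] =ᵐ[P] fun ω => f ω * (P[g | F k]) ω := by
          have := condExp_stronglyMeasurable_mul_of_bound (μ := P) (F.le k) (hfm k) hgi
            (Real.exp (|l| * ∑ t ∈ Finset.Icc m k, |c t|)) (hfb k)
          exact this
        have hcmgf : P[g | F k] ≤ᵐ[P] fun _ => Real.exp ((l * c (k+1))^2 / 2) := by
          have h0 : P[D (k+1) | F k] =ᵐ[P] 0 := by simpa using hcond (k+1)
          exact condexp_exp_mul_le (F.le k) (D (k+1)) (hDi (k+1)) (hbdd (k+1)) h0 (l * c (k+1))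
        have hstep : ∫ ω, f ω * g ω ∂P ≤
            Real.exp ((l * c (k+1))^2 / 2) * ∫ ω, f ω ∂P := by
          rw [← integral_condExp (F.le k) (f := fun ω => f ω * g ω)]
          rw [integral_congr_ae hpull]
          have hint1 : Integrable (fun ω => f ω * (P[g | F k]) ω) P :=
            (integrable_condExp (f := fun ω => f ω * g ω)).congr hpull
          have hint2 : Integrable (fun ω => f ω * Real.exp ((l * c (k+1))^2 / 2)) P :=
            (hfi k).mul_const _
          have hmono : ∀ᵐ ω ∂P, f ω * (P[g | F k]) ω ≤ f ω * Real.exp ((l * c (k+1))^2 / 2) := by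
            filter_upwards [hcmgf] with ω h
            exact mul_le_mul_of_nonneg_left h (Real.exp_nonneg _)
          calc ∫ ω, f ω * (P[g | F k]) ω ∂P
              ≤ ∫ ω, f ω * Real.exp ((l * c (k+1))^2 / 2) ∂P := integral_mono_ae hint1 hint2 hmono
            _ = Real.exp ((l * c (k+1))^2 / 2) * ∫ ω, f ω ∂P := by
                rw [integral_mul_const]; ring
        calc ∫ ω, Real.exp (l * ∑ t ∈ Finset.Icc m (k+1), c t * D t ω) ∂P
            = ∫ ω, f ω * g ω ∂P := by simp_rw [hsplit]
          _ ≤ Real.exp ((l * c (k+1))^2 / 2) * ∫ ω, f ω ∂P := hstep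
          _ ≤ Real.exp ((l * c (k+1))^2 / 2) *
              Real.exp (l^2/2 * ∑ t ∈ Finset.Icc m k, (c t)^2) := by
              refine mul_le_mul_of_nonneg_left ih (Real.exp_nonneg _)
          _ = Real.exp (l^2/2 * ∑ t ∈ Finset.Icc m (k+1), (c t)^2) := by
              rw [← Real.exp_add, Finset.sum_Icc_succ_top hk]
              ring_nf
      · rw [Finset.Icc_eq_empty hk]
        simp


/-- **Azuma bound for weighted indicator sums.**
For adapted events `A t ∈ F t` and `2 ≤ m ≤ T`, with probability at least `1 - δ`,
`∑_{t=m}^T t^{-1/2} 1_{A t} ≤ √(4 log T log (1/δ)) + ∑_{t=m}^T t^{-1/2} P(A t | F (t-1))`. -/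
theorem azuma_weighted_indicator_sum
    {Ω : Type*} {m0 : MeasurableSpace Ω} {P : Measure Ω} [IsProbabilityMeasure P]
    (F : Filtration ℕ m0) (A : ℕ → Set Ω) (hA : ∀ t, MeasurableSet[F t] (A t))
    (m T : ℕ) (hm : 2 ≤ m) (hmT : m ≤ T)
    (δ : ℝ) (hδ0 : 0 < δ) (hδ1 : δ < 1) :
    ENNReal.ofReal (1 - δ) ≤
      P {ω | ∑ t ∈ Finset.Icc m T, (Real.sqrt t)⁻¹ * (A t).indicator (fun _ => (1 : ℝ)) ω ≤
          Real.sqrt (4 * Real.log T * Real.log (1 / δ)) +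
            ∑ t ∈ Finset.Icc m T,
              (Real.sqrt t)⁻¹ * (P[(A t).indicator fun _ => (1 : ℝ) | F (t - 1)]) ω} := by
  classical
  set c : ℕ → ℝ := fun t => (Real.sqrt t)⁻¹ with hc_def
  set X : ℕ → Ω → ℝ := fun t => (A t).indicator (fun _ => (1 : ℝ)) with hX_def
  set Y : ℕ → Ω → ℝ := fun t => P[X t | F (t - 1)] with hY_def
  set D : ℕ → Ω → ℝ := fun t ω => X t ω - Y t ω with hD_def
  -- basic facts about X
  have hX01 : ∀ t ω, 0 ≤ X t ω ∧ X t ω ≤ 1 := by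
    intro t ω
    simp only [hX_def, Set.indicator_apply]
    split <;> norm_num
  have hXm : ∀ t, StronglyMeasurable[F t] (X t) := fun t =>
    stronglyMeasurable_const.indicator (hA t)
  have hXi : ∀ t, Integrable (X t) P := by
    intro t
    refine integrable_of_bdd ((hXm t).mono (F.le t)).aestronglyMeasurable (C := 1) ?_
    refine Filter.Eventually.of_forall fun ω => ?_
    rw [Real.norm_eq_abs, abs_le]
    exact ⟨by linarith [(hX01 t ω).1], (hX01 t ω).2⟩
  -- facts about D
  have hDm : ∀ t, StronglyMeasurable[F t] (D t) := fun t =>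
    (hXm t).sub (stronglyMeasurable_condExp.mono (F.mono (Nat.sub_le t 1)))
  have hDi : ∀ t, Integrable (D t) P := fun t => (hXi t).sub integrable_condExp
  have hDbdd : ∀ t, ∀ᵐ ω ∂P, |D t ω| ≤ 1 := by
    intro t
    have hY0 : 0 ≤ᵐ[P] Y t :=
      condExp_nonneg (Filter.Eventually.of_forall fun ω => (hX01 t ω).1)
    have hY1 : Y t ≤ᵐ[P] fun _ => (1 : ℝ) := by
      have h1 := condExp_mono (m := F (t - 1)) (hXi t) (integrable_const (1 : ℝ))
        (Filter.Eventually.of_forall fun ω => (hX01 t ω).2)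
      have h2 : P[fun _ : Ω => (1 : ℝ) | F (t - 1)] = fun _ => (1 : ℝ) :=
        condExp_const (F.le (t - 1)) _
      rw [h2] at h1
      exact h1
    filter_upwards [hY0, hY1] with ω h0 h1
    simp only [Pi.zero_apply] at h0
    rw [abs_le]
    constructor
    · simp only [hD_def]; linarith [(hX01 t ω).1]
    · simp only [hD_def]; linarith [(hX01 t ω).2]
  have hDcond : ∀ t, P[D t | F (t - 1)] =ᵐ[P] 0 := by
    intro t
    have h1 : P[D t | F (t - 1)] =ᵐ[P] P[X t | F (t - 1)] - P[Y t | F (t - 1)] :=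
      condExp_sub (hXi t) integrable_condExp (F (t - 1))
    have h2 : P[Y t | F (t - 1)] = Y t :=
      condExp_of_stronglyMeasurable (F.le (t - 1)) stronglyMeasurable_condExp integrable_condExp
    filter_upwards [h1] with ω h
    simp only [Pi.zero_apply]
    rw [h]
    rw [Pi.sub_apply, h2]; simp [hY_def]
  -- numeric setup
  have hT1 : (1 : ℝ) < (T : ℝ) := by exact_mod_cast (by omega : 1 < T)
  have hlogT : 0 < Real.log T := Real.log_pos hT1
  have hlogδ : 0 < Real.log (1 / δ) := Real.log_pos ((one_lt_div hδ0).2 hδ1)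
  set ε : ℝ := Real.sqrt (4 * Real.log T * Real.log (1 / δ)) with hε_def
  have hε2 : ε ^ 2 = 4 * Real.log T * Real.log (1 / δ) :=
    Real.sq_sqrt (by positivity)
  have hεpos : 0 < ε := Real.sqrt_pos.2 (by positivity)
  set V : ℝ := ∑ t ∈ Finset.Icc m T, (c t) ^ 2 with hV_def
  have hVeq : V = ∑ t ∈ Finset.Icc m T, ((t : ℝ))⁻¹ := by
    refine Finset.sum_congr rfl fun t ht => ?_
    have ht0 : (0 : ℝ) ≤ t := Nat.cast_nonneg t
    rw [hc_def]
    rw [inv_pow, Real.sq_sqrt ht0]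
  have hVpos : 0 < V := by
    rw [hVeq]
    refine Finset.sum_pos (fun t ht => ?_) ⟨m, Finset.mem_Icc.2 ⟨le_refl m, hmT⟩⟩
    have : 2 ≤ t := le_trans hm (Finset.mem_Icc.1 ht).1
    have : (0 : ℝ) < t := by exact_mod_cast (by omega : 0 < t)
    positivity
  have hVle : V ≤ 2 * Real.log T := by
    rw [hVeq]
    have := harmonic_Icc_le m T hm hmT
    linarith
  set l : ℝ := ε / V with hl_def
  have hl0 : 0 < l := div_pos hεpos hVpos
  -- integrability of the exponential
  set S : Ω → ℝ := fun ω => ∑ t ∈ Finset.Icc m T, c t * D t ω with hS_def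
  have hSm : StronglyMeasurable[m0] S :=
    Finset.stronglyMeasurable_fun_sum _ fun t _ => (((hDm t).mono (F.le t)).const_mul (c t))
  have hball : ∀ᵐ ω ∂P, ∀ t, |D t ω| ≤ 1 := ae_all_iff.2 hDbdd
  have hint : Integrable (fun ω => Real.exp (l * S ω)) P := by
    refine integrable_of_bdd
      (Real.continuous_exp.comp_aestronglyMeasurable
        ((hSm.aestronglyMeasurable.const_mul l)))
      (C := Real.exp (|l| * ∑ t ∈ Finset.Icc m T, |c t|)) ?_
    filter_upwards [hball] with ω h
    rw [Real.norm_eq_abs, Real.abs_exp]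
    apply Real.exp_le_exp.2
    calc l * S ω ≤ |l * S ω| := le_abs_self _
      _ = |l| * |S ω| := abs_mul _ _
      _ ≤ |l| * ∑ t ∈ Finset.Icc m T, |c t| := by
          refine mul_le_mul_of_nonneg_left ?_ (abs_nonneg l)
          refine (Finset.abs_sum_le_sum_abs _ _).trans (Finset.sum_le_sum fun t _ => ?_)
          rw [abs_mul]
          exact mul_le_of_le_one_right (abs_nonneg _) (h t)
  -- Chernoff bound
  have hch := measure_ge_le_exp_mul_mgf (μ := P) (X := S) ε hl0.le hint
  have hmgfle : mgf S P l ≤ Real.exp (l ^ 2 / 2 * V) :=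
    azuma_mgf F D hDm hDi hDbdd hDcond c l m (by omega) T
  have hcomb : (P {ω | ε ≤ S ω}).toReal ≤ δ := by
    have h1 : (P {ω | ε ≤ S ω}).toReal ≤ Real.exp (-l * ε) * Real.exp (l ^ 2 / 2 * V) := by
      refine hch.trans ?_
      exact mul_le_mul_of_nonneg_left hmgfle (Real.exp_nonneg _)
    rw [← Real.exp_add] at h1
    have h2 : -l * ε + l ^ 2 / 2 * V = -(ε ^ 2 / (2 * V)) := by
      rw [hl_def]
      field_simp
      ring
    rw [h2] at h1
    have h3 : Real.log (1 / δ) ≤ ε ^ 2 / (2 * V) := by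
      rw [hε2, le_div_iff₀ (by positivity)]
      nlinarith
    have h4 : Real.exp (-(ε ^ 2 / (2 * V))) ≤ δ := by
      have : Real.exp (-(ε ^ 2 / (2 * V))) ≤ Real.exp (-Real.log (1 / δ)) :=
        Real.exp_le_exp.2 (by linarith)
      refine this.trans ?_
      rw [Real.exp_neg, Real.exp_log (by positivity)]
      rw [one_div, inv_inv]
    linarith
  -- set manipulation
  have hsetEq : {ω | ∑ t ∈ Finset.Icc m T, (Real.sqrt t)⁻¹ * (A t).indicator (fun _ => (1 : ℝ)) ω ≤
          Real.sqrt (4 * Real.log T * Real.log (1 / δ)) +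
            ∑ t ∈ Finset.Icc m T,
              (Real.sqrt t)⁻¹ * (P[(A t).indicator fun _ => (1 : ℝ) | F (t - 1)]) ω} =
      {ω | S ω ≤ ε} := by
    ext ω
    simp only [Set.mem_setOf_eq]
    have hid : S ω = (∑ t ∈ Finset.Icc m T, c t * X t ω) -
        ∑ t ∈ Finset.Icc m T, c t * Y t ω := by
      rw [hS_def, ← Finset.sum_sub_distrib]
      exact Finset.sum_congr rfl fun t _ => by rw [hD_def]; ring
    constructor
    · intro h
      rw [hid]
      have h' : ∑ t ∈ Finset.Icc m T, c t * X t ω ≤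
          ε + ∑ t ∈ Finset.Icc m T, c t * Y t ω := h
      linarith
    · intro h
      rw [hid] at h
      show ∑ t ∈ Finset.Icc m T, c t * X t ω ≤ ε + ∑ t ∈ Finset.Icc m T, c t * Y t ω
      linarith
  rw [hsetEq]
  -- final measure arithmetic
  have hEmeas : MeasurableSet {ω | S ω ≤ ε} :=
    measurableSet_le hSm.measurable measurable_const
  have hPc : P {ω | S ω ≤ ε}ᶜ ≤ ENNReal.ofReal δ := by
    have hsub : {ω | S ω ≤ ε}ᶜ ⊆ {ω | ε ≤ S ω} := by
      intro ω hω
      simp only [Set.mem_compl_iff, Set.mem_setOf_eq, not_le] at hω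
      exact le_of_lt hω
    have h1 : P {ω | S ω ≤ ε}ᶜ ≤ P {ω | ε ≤ S ω} := measure_mono hsub
    have h2 : (P {ω | S ω ≤ ε}ᶜ).toReal ≤ δ := by
      refine le_trans ?_ hcomb
      exact ENNReal.toReal_mono (measure_ne_top P _) h1
    exact (ENNReal.le_ofReal_iff_toReal_le (measure_ne_top P _) hδ0.le).2 h2
  calc ENNReal.ofReal (1 - δ) = 1 - ENNReal.ofReal δ := by
        rw [ENNReal.ofReal_sub _ hδ0.le, ENNReal.ofReal_one]
    _ ≤ 1 - P {ω | S ω ≤ ε}ᶜ := tsub_le_tsub_left hPc 1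
    _ = P {ω | S ω ≤ ε} := by
        rw [← prob_compl_eq_one_sub hEmeas.compl, compl_compl]
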